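/- For all non-negative integers m, n and real q with 0 < q < 1: (-1)^m ∑_{n ≥ k_1 > ⋯ > k_m ≥ 1} ∏_{j=1}^m q^{k_j}/[k_j]_q = ∑_{n ≥ k_1 > ⋯ > k_m ≥ 1} (-1)^{k_1} q^{k_1(k_1+1)/2} C_q(n,k_1) ∏_{j=1}^m 1/[k_j]_q, where the sums are over strictly decreasing integer tuples. -/

import Mathlib

set_option linter.unusedSectionVars false

open Finset


/-- Gaussian binomial coefficient, vanishing unless `k ≤ n`. -/
noncomputable def qbinom (q : ℝ) (n k : ℕ) : ℝ :=
  if k ≤ n then ∏ j ∈ Finset.Icc 1 k, (1 - q ^ (n - k + j)) / (1 - q ^ j) else 0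

/-- The `q`-analog of a natural number: `[k]_q = (1-q^k)/(1-q)`. -/
noncomputable def qnum (q : ℝ) (k : ℕ) : ℝ := (1 - q ^ k) / (1 - q)

/-- `Z_n^>[{1}^m] = ∑_{n ≥ k₁ > ⋯ > k_m ≥ 1} ∏_j q^{k_j}/[k_j]_q`. -/
noncomputable def Zgt (q : ℝ) : ℕ → ℕ → ℝ
  | _, 0 => 1
  | n, m + 1 => ∑ k ∈ Finset.Icc 1 n, q ^ k / qnum q k * Zgt q (k - 1) m

/-- `∑_{n ≥ k₁ > ⋯ > k_m ≥ 1} ∏_j 1/[k_j]_q`. -/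
noncomputable def Hgt (q : ℝ) : ℕ → ℕ → ℝ
  | _, 0 => 1
  | n, m + 1 => ∑ k ∈ Finset.Icc 1 n, (1 / qnum q k) * Hgt q (k - 1) m

/-- `A_n^>[{1}^m] = ∑_{n ≥ k₁ > ⋯ > k_m ≥ 1} (-1)^{k₁} q^{k₁(k₁+1)/2} C_q(n,k₁)
    ∏_j 1/[k_j]_q`. -/
noncomputable def Agt (q : ℝ) (n : ℕ) : ℕ → ℝ
  | 0 => 1
  | m + 1 => ∑ k ∈ Finset.Icc 1 n,
      (-1 : ℝ) ^ k * q ^ (k * (k + 1) / 2) * qbinom q n k *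
        (1 / qnum q k) * Hgt q (k - 1) m

noncomputable def qfac (q : ℝ) (n : ℕ) : ℝ := ∏ j ∈ Finset.Icc 1 n, (1 - q ^ j)

lemma tri (j : ℕ) : (j + 1) * (j + 1 + 1) / 2 = j * (j + 1) / 2 + (j + 1) := by
  obtain ⟨c, hc⟩ : 2 ∣ j * (j + 1) := (Nat.even_mul_succ_self j).two_dvd
  have h2 : (j + 1) * (j + 1 + 1) = 2 * (c + (j + 1)) := by
    have : (j + 1) * (j + 1 + 1) = j * (j + 1) + 2 * (j + 1) := by ring
    rw [this, hc]; ring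
  rw [hc, h2, Nat.mul_div_cancel_left _ (by norm_num), Nat.mul_div_cancel_left _ (by norm_num)]

section
variable {q : ℝ} (hq0 : 0 < q) (hq1 : q < 1)
include hq0 hq1

lemma one_sub_pow_pos (k : ℕ) (hk : 1 ≤ k) : 0 < 1 - q ^ k := by
  have := pow_lt_one₀ hq0.le hq1 (by omega : k ≠ 0); linarith

lemma qfac_pos (n : ℕ) : 0 < qfac q n := by
  apply Finset.prod_pos
  intro j hj
  exact one_sub_pow_pos hq0 hq1 j (mem_Icc.1 hj).1

lemma qfac_ne (n : ℕ) : qfac q n ≠ 0 := (qfac_pos hq0 hq1 n).ne'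

lemma qfac_zero : qfac q 0 = 1 := by simp [qfac]

lemma qfac_succ (n : ℕ) : qfac q (n + 1) = qfac q n * (1 - q ^ (n + 1)) :=
  Finset.prod_Icc_succ_top (by omega) _

lemma qbinom_eq {n k : ℕ} (h : k ≤ n) :
    qbinom q n k = qfac q n / (qfac q k * qfac q (n - k)) := by
  rw [qbinom, if_pos h]
  rw [Finset.prod_div_distrib]
  have h1 : ∏ j ∈ Icc 1 k, (1 - q ^ (n - k + j)) = ∏ i ∈ Icc (n - k + 1) n, (1 - q ^ i) := by
    have hset : Icc (n - k + 1) n = (Icc 1 k).map (addLeftEmbedding (n - k)) := by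
      rw [Finset.map_add_left_Icc]; congr 1; omega
    rw [hset, Finset.prod_map]; rfl
  rw [h1]
  have h2 : qfac q (n - k) * ∏ i ∈ Icc (n - k + 1) n, (1 - q ^ i) = qfac q n := by
    unfold qfac
    rw [show (1:ℕ) = 0 + 1 by rfl, Finset.Icc_add_one_left_eq_Ioc, Finset.Icc_add_one_left_eq_Ioc, Nat.zero_add, Finset.Icc_add_one_left_eq_Ioc]
    exact Finset.prod_Ioc_consecutive _ (by omega) (by omega)
  rw [← h2]
  rw [show (∏ x ∈ Icc 1 k, (1 - q ^ x)) = qfac q k from rfl]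
  have hnk := qfac_ne hq0 hq1 (n - k)
  have hk := qfac_ne hq0 hq1 k
  field_simp

lemma qbinom_zero (n : ℕ) : qbinom q n 0 = 1 := by simp [qbinom]

lemma qbinom_of_gt {n k : ℕ} (h : n < k) : qbinom q n k = 0 := by
  rw [qbinom, if_neg (by omega)]

lemma qbinom_self (n : ℕ) : qbinom q n n = 1 := by
  rw [qbinom_eq hq0 hq1 (le_refl n)]
  simp [qfac_zero hq0 hq1]
  exact qfac_ne hq0 hq1 n

-- absorption
lemma qbinom_absorb {k n : ℕ} (hk : k ≤ n) :
    (1 - q ^ (k + 1)) * qbinom q (n + 1) (k + 1) = (1 - q ^ (n + 1)) * qbinom q n k := by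
  rw [qbinom_eq hq0 hq1 (by omega : k + 1 ≤ n + 1), qbinom_eq hq0 hq1 hk]
  have e : n + 1 - (k + 1) = n - k := by omega
  rw [e, qfac_succ hq0 hq1, qfac_succ hq0 hq1]
  have h1 := qfac_ne hq0 hq1 n
  have h2 := qfac_ne hq0 hq1 k
  have h3 := qfac_ne hq0 hq1 (n - k)
  have h4 := (one_sub_pow_pos hq0 hq1 (k+1) (by omega)).ne'
  have h5 := (one_sub_pow_pos hq0 hq1 (n+1) (by omega)).ne'
  field_simp

-- Pascal, form 1 : C(n+1,k+1) = C(n,k) + q^(k+1) C(n,k+1), for all n k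
lemma qbinom_pascal1 (n k : ℕ) :
    qbinom q (n + 1) (k + 1) = qbinom q n k + q ^ (k + 1) * qbinom q n (k + 1) := by
  rcases lt_trichotomy k n with h | h | h
  · obtain ⟨d, rfl⟩ := Nat.exists_eq_add_of_lt h
    rw [qbinom_eq hq0 hq1 (by omega), qbinom_eq hq0 hq1 (by omega),
      qbinom_eq hq0 hq1 (by omega)]
    have e1 : k + d + 1 + 1 - (k + 1) = d + 1 := by omega
    have e2 : k + d + 1 - k = d + 1 := by omega
    have e3 : k + d + 1 - (k + 1) = d := by omega
    rw [e1, e2, e3]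
    rw [show k + d + 1 + 1 = (k + d + 1) + 1 by ring, qfac_succ hq0 hq1, qfac_succ hq0 hq1 k,
      qfac_succ hq0 hq1 d]
    have h1 := qfac_ne hq0 hq1 (k + d + 1)
    have h2 := qfac_ne hq0 hq1 k
    have h3 := qfac_ne hq0 hq1 d
    have h4 := (one_sub_pow_pos hq0 hq1 (k+1) (by omega)).ne'
    have h5 := (one_sub_pow_pos hq0 hq1 (d+1) (by omega)).ne'
    field_simp
    ring_nf
  · subst h
    rw [qbinom_self hq0 hq1, qbinom_self hq0 hq1, qbinom_of_gt hq0 hq1 (by omega), mul_zero, add_zero]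
  · rw [qbinom_of_gt hq0 hq1 (by omega), qbinom_of_gt hq0 hq1 (by omega), qbinom_of_gt hq0 hq1 (by omega)]
    ring

-- Pascal, form 2 : C(n+1,k+1) = q^(n-k) C(n,k) + C(n,k+1), for k ≤ n
lemma qbinom_pascal2 {n k : ℕ} (h : k ≤ n) :
    qbinom q (n + 1) (k + 1) = q ^ (n - k) * qbinom q n k + qbinom q n (k + 1) := by
  rcases lt_or_eq_of_le h with h | h
  · obtain ⟨d, rfl⟩ := Nat.exists_eq_add_of_lt h
    rw [qbinom_eq hq0 hq1 (by omega), qbinom_eq hq0 hq1 (by omega),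
      qbinom_eq hq0 hq1 (by omega)]
    have e1 : k + d + 1 + 1 - (k + 1) = d + 1 := by omega
    have e2 : k + d + 1 - k = d + 1 := by omega
    have e3 : k + d + 1 - (k + 1) = d := by omega
    rw [e1, e2, e3]
    rw [show k + d + 1 + 1 = (k + d + 1) + 1 by ring, qfac_succ hq0 hq1, qfac_succ hq0 hq1 k,
      qfac_succ hq0 hq1 d]
    have h1 := qfac_ne hq0 hq1 (k + d + 1)
    have h2 := qfac_ne hq0 hq1 k
    have h3 := qfac_ne hq0 hq1 d
    have h4 := (one_sub_pow_pos hq0 hq1 (k+1) (by omega)).ne'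
    have h5 := (one_sub_pow_pos hq0 hq1 (d+1) (by omega)).ne'
    field_simp
    ring_nf
  · subst h
    rw [qbinom_self hq0 hq1, qbinom_self hq0 hq1, qbinom_of_gt hq0 hq1 (by omega), add_zero,
      Nat.sub_self, pow_zero, mul_one]


lemma head_sum (n : ℕ) : ∀ j : ℕ,
    ∑ k ∈ Finset.range (j + 1), (-1 : ℝ) ^ k * q ^ (k * (k - 1) / 2) * qbinom q (n + 1) k
      = (-1 : ℝ) ^ j * q ^ (j * (j + 1) / 2) * qbinom q n j := by
  intro j
  induction j with
  | zero => simp [qbinom_zero hq0 hq1]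
  | succ j ih =>
    rw [Finset.sum_range_succ, ih, qbinom_pascal1 hq0 hq1 n j]
    have e1 : (j + 1) * (j + 1 - 1) / 2 = j * (j + 1) / 2 := by
      rw [Nat.add_sub_cancel, Nat.mul_comm]
    rw [e1, tri j, pow_add, pow_succ]
    ring

lemma tail_sum (n j : ℕ) :
    ∑ k ∈ Finset.Icc (j + 1) (n + 1), (-1 : ℝ) ^ k * q ^ (k * (k - 1) / 2) * qbinom q (n + 1) k
      = -((-1 : ℝ) ^ j * q ^ (j * (j + 1) / 2) * qbinom q n j) := by
  rcases le_or_gt j (n + 1) with h | h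
  · have full := head_sum hq0 hq1 n (n + 1)
    rw [qbinom_of_gt hq0 hq1 (by omega), mul_zero] at full
    have hj := head_sum hq0 hq1 n j
    have hicc : Finset.Icc (j + 1) (n + 1) = Finset.Ico (j + 1) (n + 2) := by
      rw [← Finset.Ico_add_one_right_eq_Icc]; rfl
    have split : (∑ k ∈ Finset.range (j + 1),
          (-1 : ℝ) ^ k * q ^ (k * (k - 1) / 2) * qbinom q (n + 1) k)
        + (∑ k ∈ Finset.Ico (j + 1) (n + 2),
          (-1 : ℝ) ^ k * q ^ (k * (k - 1) / 2) * qbinom q (n + 1) k)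
        = ∑ k ∈ Finset.range (n + 2),
          (-1 : ℝ) ^ k * q ^ (k * (k - 1) / 2) * qbinom q (n + 1) k := by
      rw [Finset.range_eq_Ico, Finset.range_eq_Ico]
      exact Finset.sum_Ico_consecutive _ (by omega) (by omega)
    have h2 : (n + 1) + 1 = n + 2 := rfl
    rw [h2] at full
    rw [hicc]
    rw [hj] at split
    linarith
  · rw [Finset.Icc_eq_empty (by omega), Finset.sum_empty,
      qbinom_of_gt hq0 hq1 (by omega : n < j)]
    ring

lemma key_sum (n m : ℕ) :
    ∑ k ∈ Finset.Icc 1 (n + 1),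
        (-1 : ℝ) ^ k * q ^ (k * (k - 1) / 2) * qbinom q (n + 1) k * Hgt q (k - 1) m
      = -(Agt q n m) := by
  cases m with
  | zero =>
    have t := tail_sum hq0 hq1 n 0
    norm_num [qbinom_zero hq0 hq1] at t
    have hH : ∀ x : ℕ, Hgt q x 0 = 1 := fun _ => rfl
    have hA : Agt q n 0 = 1 := rfl
    simp only [hH, mul_one, hA]
    exact t
  | succ m =>
    have hrw : ∀ k ∈ Finset.Icc 1 (n + 1),
        (-1 : ℝ) ^ k * q ^ (k * (k - 1) / 2) * qbinom q (n + 1) k * Hgt q (k - 1) (m + 1)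
          = ∑ j ∈ Finset.Icc 1 (n + 1), (if j < k then
              ((-1 : ℝ) ^ k * q ^ (k * (k - 1) / 2) * qbinom q (n + 1) k)
                * ((1 / qnum q j) * Hgt q (j - 1) m) else 0) := by
      intro k hk
      have h1 : Hgt q (k - 1) (m + 1)
          = ∑ j ∈ Finset.Icc 1 (k - 1), (1 / qnum q j) * Hgt q (j - 1) m := rfl
      rw [h1, Finset.mul_sum, ← Finset.sum_filter]
      apply Finset.sum_congr
      · rw [Finset.mem_Icc] at hk
        ext j; simp only [Finset.mem_filter, Finset.mem_Icc]; omega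
      · intros; rfl
    rw [Finset.sum_congr rfl hrw, Finset.sum_comm]
    have hin : ∀ j ∈ Finset.Icc 1 (n + 1),
        (∑ k ∈ Finset.Icc 1 (n + 1), (if j < k then
            ((-1 : ℝ) ^ k * q ^ (k * (k - 1) / 2) * qbinom q (n + 1) k)
              * ((1 / qnum q j) * Hgt q (j - 1) m) else 0))
          = -((-1 : ℝ) ^ j * q ^ (j * (j + 1) / 2) * qbinom q n j)
              * ((1 / qnum q j) * Hgt q (j - 1) m) := by
      intro j hj
      rw [← Finset.sum_filter]
      have hset : Finset.filter (fun k => j < k) (Finset.Icc 1 (n + 1))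
          = Finset.Icc (j + 1) (n + 1) := by
        ext k; simp only [Finset.mem_filter, Finset.mem_Icc]; omega
      rw [hset, ← Finset.sum_mul, tail_sum hq0 hq1 n j]
    rw [Finset.sum_congr rfl hin]
    have hA : Agt q n (m + 1) = ∑ j ∈ Finset.Icc 1 n,
        (-1 : ℝ) ^ j * q ^ (j * (j + 1) / 2) * qbinom q n j
          * (1 / qnum q j) * Hgt q (j - 1) m := rfl
    have hsplit := Finset.sum_Icc_succ_top (by omega : 1 ≤ n + 1)
      (fun j => -((-1 : ℝ) ^ j * q ^ (j * (j + 1) / 2) * qbinom q n j)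
          * ((1 / qnum q j) * Hgt q (j - 1) m))
    rw [hsplit, qbinom_of_gt hq0 hq1 (by omega : n < n + 1), hA]
    rw [← Finset.sum_neg_distrib]
    rw [Finset.sum_congr rfl (fun j _ => by ring :
      ∀ j ∈ Finset.Icc 1 n, -((-1 : ℝ) ^ j * q ^ (j * (j + 1) / 2) * qbinom q n j)
          * ((1 / qnum q j) * Hgt q (j - 1) m)
        = -((-1 : ℝ) ^ j * q ^ (j * (j + 1) / 2) * qbinom q n j
            * (1 / qnum q j) * Hgt q (j - 1) m))]
    ring


lemma agt_diff (n m : ℕ) :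
    Agt q (n + 1) (m + 1)
      = Agt q n (m + 1) - q ^ (n + 1) / qnum q (n + 1) * Agt q n m := by
  have hA : Agt q (n + 1) (m + 1) = ∑ k ∈ Finset.Icc 1 (n + 1),
      (-1 : ℝ) ^ k * q ^ (k * (k + 1) / 2) * qbinom q (n + 1) k
        * (1 / qnum q k) * Hgt q (k - 1) m := rfl
  have hpt : ∀ k ∈ Finset.Icc 1 (n + 1),
      (-1 : ℝ) ^ k * q ^ (k * (k + 1) / 2) * qbinom q (n + 1) k
          * (1 / qnum q k) * Hgt q (k - 1) m
        = (-1 : ℝ) ^ k * q ^ (k * (k + 1) / 2) * qbinom q n k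
            * (1 / qnum q k) * Hgt q (k - 1) m
          + q ^ (n + 1) / qnum q (n + 1)
            * ((-1 : ℝ) ^ k * q ^ (k * (k - 1) / 2) * qbinom q (n + 1) k
                * Hgt q (k - 1) m) := by
    intro k hk
    rw [Finset.mem_Icc] at hk
    obtain ⟨k', rfl⟩ : ∃ k', k = k' + 1 := ⟨k - 1, by omega⟩
    obtain ⟨d, rfl⟩ : ∃ d, n = k' + d := ⟨n - k', by omega⟩
    have hk'n : k' ≤ k' + d := by omega
    have e2 : k' + d - k' = d := by omega
    have hp := qbinom_pascal2 hq0 hq1 hk'n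
    rw [e2] at hp
    have hab := qbinom_absorb hq0 hq1 hk'n
    have h1 : (0:ℝ) < 1 - q ^ (k' + 1) := one_sub_pow_pos hq0 hq1 _ (by omega)
    have h2 : (0:ℝ) < 1 - q ^ (k' + d + 1) := one_sub_pow_pos hq0 hq1 _ (by omega)
    have hq : (0:ℝ) < 1 - q := by linarith
    have hC : qbinom q (k' + d) k'
        = (1 - q ^ (k' + 1)) * qbinom q (k' + d + 1) (k' + 1) / (1 - q ^ (k' + d + 1)) := by
      field_simp
      linarith [hab]
    have hkey : q ^ ((k' + 1) * (k' + 1 + 1) / 2) * q ^ d * qbinom q (k' + d) k'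
          * (1 / qnum q (k' + 1))
        = q ^ (k' + d + 1) / qnum q (k' + d + 1)
            * (q ^ ((k' + 1) * (k' + 1 - 1) / 2) * qbinom q (k' + d + 1) (k' + 1)) := by
      rw [hC]
      have e1 : (k' + 1) * (k' + 1 - 1) / 2 = k' * (k' + 1) / 2 := by
        rw [Nat.add_sub_cancel, Nat.mul_comm]
      rw [e1, tri k']
      unfold qnum
      have h1' := h1.ne'
      have h2' := h2.ne'
      have hq' := hq.ne'
      field_simp
      ring
    rw [hp]
    simp only [Nat.add_sub_cancel] at hkey ⊢
    linear_combination ((-1 : ℝ) ^ (k' + 1) * Hgt q k' m) * hkey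
      - ((-1 : ℝ) ^ k' * q * q ^ k' * q ^ d * q ^ ((k' + 1) * k' / 2) * Hgt q k' m
          * (qnum q (k' + d + 1))⁻¹) * hp
  rw [hA, Finset.sum_congr rfl hpt, Finset.sum_add_distrib]
  rw [Finset.sum_Icc_succ_top (by omega : 1 ≤ n + 1), qbinom_of_gt hq0 hq1 (by omega : n < n + 1)]
  rw [← Finset.mul_sum, key_sum hq0 hq1 n m]
  have hA2 : Agt q n (m + 1) = ∑ k ∈ Finset.Icc 1 n,
      (-1 : ℝ) ^ k * q ^ (k * (k + 1) / 2) * qbinom q n k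
        * (1 / qnum q k) * Hgt q (k - 1) m := rfl
  rw [← hA2]
  ring

end


theorem strict_duality (m n : ℕ) (q : ℝ) (hq0 : 0 < q) (hq1 : q < 1) :
    (-1 : ℝ) ^ m * Zgt q n m = Agt q n m := by
  induction n generalizing m with
  | zero =>
    cases m with
    | zero => rw [show Zgt q 0 0 = 1 from rfl, show Agt q 0 0 = 1 from rfl]; norm_num
    | succ m =>
      have hZ : Zgt q 0 (m + 1) = 0 := by
        rw [show Zgt q 0 (m + 1)
          = ∑ k ∈ Finset.Icc 1 0, q ^ k / qnum q k * Zgt q (k - 1) m from rfl]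
        simp
      have hAg : Agt q 0 (m + 1) = 0 := by
        rw [show Agt q 0 (m + 1) = ∑ k ∈ Finset.Icc 1 0,
          (-1 : ℝ) ^ k * q ^ (k * (k + 1) / 2) * qbinom q 0 k
            * (1 / qnum q k) * Hgt q (k - 1) m from rfl]
        simp
      rw [hZ, hAg, mul_zero]
  | succ n ih =>
    cases m with
    | zero => rw [show Zgt q (n + 1) 0 = 1 from rfl, show Agt q (n + 1) 0 = 1 from rfl]; norm_num
    | succ m =>
      have hZ : Zgt q (n + 1) (m + 1)
          = Zgt q n (m + 1) + q ^ (n + 1) / qnum q (n + 1) * Zgt q n m := by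
        rw [show Zgt q (n + 1) (m + 1)
          = ∑ k ∈ Finset.Icc 1 (n + 1), q ^ k / qnum q k * Zgt q (k - 1) m from rfl]
        rw [Finset.sum_Icc_succ_top (by omega : 1 ≤ n + 1)]
        rw [show Zgt q n (m + 1)
          = ∑ k ∈ Finset.Icc 1 n, q ^ k / qnum q k * Zgt q (k - 1) m from rfl]
        norm_num
      rw [hZ, agt_diff hq0 hq1 n m, ← ih (m + 1), ← ih m]
      ring
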